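/- arXiv:1306.6539 — 2 statements merged into one kernel-verified Lean document; each statement's English description precedes it below -/
import Mathlib

section
/- Let X be a complex Banach space, B : X → X a continuous ℂ-linear operator invertible with continuous inverse B⁻¹, and f : ℝ → X continuous. Then u(t) = ∫_{0}^{t} (i/2)·B⁻¹((exp(−i·(t−s)·B) − exp(i·(t−s)·B))(f(s))) ds, for t ≥ 0, is twice differentiable and satisfies the inhomogeneous wave equation u''(t) + B(B(u(t))) = f(t) for all t ≥ 0, with u(0) = 0 and u'(0) = 0. -/
open NormedSpace Complex intervalIntegral

private theorem aux_clm_apply {X : Type*} [NormedAddCommGroup X] [NormedSpace ℂ X]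
    {c : ℝ → (X →L[ℂ] X)} {c' : X →L[ℂ] X} {g : ℝ → X} {g' : X} {t : ℝ}
    (hc : HasDerivAt c c' t) (hg : HasDerivAt g g' t) :
    HasDerivAt (fun s => c s (g s)) (c' (g t) + c t g') t := by
  have hc2 : HasDerivAt (fun s => (ContinuousLinearMap.restrictScalarsL ℂ X X ℝ ℝ) (c s))
      ((ContinuousLinearMap.restrictScalarsL ℂ X X ℝ ℝ) c') t :=
    (ContinuousLinearMap.restrictScalarsL ℂ X X ℝ ℝ).hasFDerivAt.comp_hasDerivAt t hc
  exact hc2.clm_apply hg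

private theorem aux_clm_comp {X : Type*} [NormedAddCommGroup X] [NormedSpace ℂ X]
    (L : X →L[ℂ] X) {g : ℝ → X} {g' : X} {t : ℝ} (hg : HasDerivAt g g' t) :
    HasDerivAt (fun s => L (g s)) (L g') t :=
  (L.restrictScalars ℝ).hasFDerivAt.comp_hasDerivAt t hg

/-- Causal Green's function representation for the inhomogeneous wave equation:
`u t = ∫_0^t (i/2)·B⁻¹((exp(−i(t−s)B) − exp(i(t−s)B))(f s)) ds` is twice differentiable
for `t ≥ 0` and satisfies `u'' + B(B u) = f` there, with `u 0 = 0` and `u' 0 = 0`. -/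
theorem stmt_7
    {X : Type*} [NormedAddCommGroup X] [NormedSpace ℂ X] [CompleteSpace X]
    (B Binv : X →L[ℂ] X)
    (hB₁ : ∀ x, B (Binv x) = x) (hB₂ : ∀ x, Binv (B x) = x)
    (f : ℝ → X) (hf : Continuous f)
    (u : ℝ → X)
    (hu : ∀ t : ℝ, u t = ∫ s in (0:ℝ)..t, (Complex.I / 2) •
      Binv ((NormedSpace.exp ((-(Complex.I * ((t - s : ℝ) : ℂ))) • B)
            - NormedSpace.exp ((Complex.I * ((t - s : ℝ) : ℂ)) • B)) (f s))) :
    ∃ u' u'' : ℝ → X,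
      (∀ t : ℝ, 0 ≤ t → HasDerivAt u (u' t) t) ∧
      (∀ t : ℝ, 0 ≤ t → HasDerivAt u' (u'' t) t) ∧
      (∀ t : ℝ, 0 ≤ t → u'' t + B (B (u t)) = f t) ∧
      u 0 = 0 ∧ u' 0 = 0 := by
  letI : NormedAlgebra ℚ (X →L[ℂ] X) := NormedAlgebra.restrictScalars ℚ ℂ _
  set E : ℂ → ℝ → (X →L[ℂ] X) := fun c t => NormedSpace.exp ((c * (t:ℂ)) • B) with hE
  have hEcont : ∀ c : ℂ, Continuous fun t : ℝ => E c t := by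
    intro c
    exact exp_continuous.comp (by continuity)
  have hEder : ∀ (c : ℂ) (t : ℝ), HasDerivAt (fun s : ℝ => E c s) (c • (E c t * B)) t := by
    intro c t
    have h1 := hasDerivAt_exp_smul_const (𝕂 := ℂ) (𝔸 := X →L[ℂ] X) B (c * t)
    have h2 : HasDerivAt (fun s : ℝ => c * (s : ℂ)) c t := by
      simpa using (Complex.ofRealCLM.hasDerivAt (x := t)).const_mul c
    have := h1.scomp t h2
    exact this
  have hcommB : ∀ (c : ℂ) (t : ℝ) (x : X), E c t (B x) = B (E c t x) := by
    intro c t x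
    have h : Commute (E c t) B := ((Commute.refl B).smul_left (c * t)).exp_left
    calc E c t (B x) = (E c t * B) x := rfl
      _ = (B * E c t) x := by rw [h.eq]
      _ = B (E c t x) := rfl
  have hEE : ∀ (t : ℝ) (x : X), E (-I) t (E I t x) = x := by
    intro t x
    have hc : Commute ((-I * (t:ℂ)) • B) ((I * (t:ℂ)) • B) :=
      ((Commute.refl B).smul_left _).smul_right _
    have h1 : E (-I) t * E I t = 1 := by
      rw [hE]; dsimp only
      rw [← NormedSpace.exp_add_of_commute hc]
      have : (-I * (t:ℂ)) • B + ((I * (t:ℂ))) • B = (0 : X →L[ℂ] X) := by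
        rw [← add_smul]; ring_nf; simp
      rw [this, NormedSpace.exp_zero]
    calc E (-I) t (E I t x) = (E (-I) t * E I t) x := rfl
      _ = x := by rw [h1]; rfl
  have hEE' : ∀ (t : ℝ) (x : X), E I t (E (-I) t x) = x := by
    intro t x
    have hc : Commute ((I * (t:ℂ)) • B) ((-I * (t:ℂ)) • B) :=
      ((Commute.refl B).smul_left _).smul_right _
    have h1 : E I t * E (-I) t = 1 := by
      rw [hE]; dsimp only
      rw [← NormedSpace.exp_add_of_commute hc]
      have : (I * (t:ℂ)) • B + ((-I * (t:ℂ))) • B = (0 : X →L[ℂ] X) := by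
        rw [← add_smul]; ring_nf; simp
      rw [this, NormedSpace.exp_zero]
    calc E I t (E (-I) t x) = (E I t * E (-I) t) x := rfl
      _ = x := by rw [h1]; rfl
  set g₁ : ℝ → X := fun t => ∫ s in (0:ℝ)..t, E I s (f s) with hg₁def
  set g₂ : ℝ → X := fun t => ∫ s in (0:ℝ)..t, E (-I) s (f s) with hg₂def
  have hp₁ : Continuous fun s : ℝ => E I s (f s) := (hEcont I).clm_apply hf
  have hp₂ : Continuous fun s : ℝ => E (-I) s (f s) := (hEcont (-I)).clm_apply hf
  have hg₁ : ∀ t : ℝ, HasDerivAt g₁ (E I t (f t)) t := fun t =>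
    integral_hasDerivAt_right (hp₁.intervalIntegrable _ _)
      (hp₁.stronglyMeasurableAtFilter _ _) hp₁.continuousAt
  have hg₂ : ∀ t : ℝ, HasDerivAt g₂ (E (-I) t (f t)) t := fun t =>
    integral_hasDerivAt_right (hp₂.intervalIntegrable _ _)
      (hp₂.stronglyMeasurableAtFilter _ _) hp₂.continuousAt
  -- rewrite u in separated-variables form
  have hurw : ∀ t : ℝ, u t = (I/2) • Binv (E (-I) t (g₁ t) - E I t (g₂ t)) := by
    intro t
    rw [hu t]
    have hint : ∀ s : ℝ,
        (Complex.I / 2) • Binv ((NormedSpace.exp ((-(Complex.I * ((t - s : ℝ) : ℂ))) • B)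
            - NormedSpace.exp ((Complex.I * ((t - s : ℝ) : ℂ)) • B)) (f s))
        = (I/2) • Binv (E (-I) t (E I s (f s)) - E I t (E (-I) s (f s))) := by
      intro s
      have e1 : NormedSpace.exp ((-(Complex.I * ((t - s : ℝ) : ℂ))) • B)
          = E (-I) t * E I s := by
        rw [hE]; dsimp only
        have hc : Commute ((-I * (t:ℂ)) • B) ((I * (s:ℂ)) • B) :=
          ((Commute.refl B).smul_left _).smul_right _
        rw [← NormedSpace.exp_add_of_commute hc, ← add_smul]
        congr 2
        push_cast
        ring
      have e2 : NormedSpace.exp ((Complex.I * ((t - s : ℝ) : ℂ)) • B)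
          = E I t * E (-I) s := by
        rw [hE]; dsimp only
        have hc : Commute ((I * (t:ℂ)) • B) ((-I * (s:ℂ)) • B) :=
          ((Commute.refl B).smul_left _).smul_right _
        rw [← NormedSpace.exp_add_of_commute hc, ← add_smul]
        congr 2
        push_cast
        ring
      rw [e1, e2]
      rfl
    rw [intervalIntegral.integral_congr (fun s _ => hint s)]
    rw [intervalIntegral.integral_smul]
    congr 1
    have ha : Continuous fun s : ℝ => E (-I) t (E I s (f s)) := (E (-I) t).continuous.comp hp₁
    have hb : Continuous fun s : ℝ => E I t (E (-I) s (f s)) := (E I t).continuous.comp hp₂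
    rw [ContinuousLinearMap.intervalIntegral_comp_comm Binv
      (f := fun s : ℝ => E (-I) t (E I s (f s)) - E I t (E (-I) s (f s)))
      ((ha.sub hb).intervalIntegrable 0 t)]
    congr 1
    rw [intervalIntegral.integral_sub (ha.intervalIntegrable _ _) (hb.intervalIntegrable _ _)]
    rw [(E (-I) t).intervalIntegral_comp_comm (hp₁.intervalIntegrable _ _),
        (E I t).intervalIntegral_comp_comm (hp₂.intervalIntegrable _ _)]
  -- first derivative
  have key₁ : ∀ t : ℝ, HasDerivAt u ((2:ℂ)⁻¹ • (E (-I) t (g₁ t) + E I t (g₂ t))) t := by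
    intro t
    have d1 := aux_clm_apply (hEder (-I) t) (hg₁ t)
    have d2 := aux_clm_apply (hEder I t) (hg₂ t)
    have d3 := aux_clm_comp Binv (d1.sub d2)
    have d4 := d3.const_smul (I/2)
    have hufun : u = fun t => (I/2) • Binv (E (-I) t (g₁ t) - E I t (g₂ t)) := funext hurw
    rw [hufun]
    convert d4 using 1
    · funext s; rfl
    simp only [Function.comp_def, ContinuousLinearMap.coe_coe, ContinuousLinearMap.smul_apply,
      ContinuousLinearMap.mul_apply, hEE, hEE', map_sub, map_add, map_smul, hcommB, hB₂]
    match_scalars <;> ring_nf <;> simp [Complex.I_sq] <;> ring_nf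
  -- second derivative
  have key₂ : ∀ t : ℝ, HasDerivAt (fun t => (2:ℂ)⁻¹ • (E (-I) t (g₁ t) + E I t (g₂ t)))
      (f t - B (B (u t))) t := by
    intro t
    have d1 := aux_clm_apply (hEder (-I) t) (hg₁ t)
    have d2 := aux_clm_apply (hEder I t) (hg₂ t)
    have d4 := (d1.add d2).const_smul ((2:ℂ)⁻¹)
    convert d4 using 1
    · funext s; rfl
    rw [hurw t]
    simp only [ContinuousLinearMap.smul_apply, ContinuousLinearMap.mul_apply, hEE, hEE',
      map_sub, map_add, map_smul, hcommB, hB₂, hB₁]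
    match_scalars <;> ring_nf
  refine ⟨fun t => (2:ℂ)⁻¹ • (E (-I) t (g₁ t) + E I t (g₂ t)),
    fun t => f t - B (B (u t)),
    fun t _ => key₁ t, fun t _ => key₂ t, fun t _ => sub_add_cancel _ _, ?_, ?_⟩
  · rw [hu 0, intervalIntegral.integral_same]
  · show (2:ℂ)⁻¹ • (E (-I) 0 (g₁ 0) + E I 0 (g₂ 0)) = 0
    have h1 : g₁ 0 = 0 := intervalIntegral.integral_same
    have h2 : g₂ 0 = 0 := intervalIntegral.integral_same
    rw [h1, h2]
    simp
end

section
/- Fix n ≥ 1 and an integer k ≥ 1. Let ν ∈ ℝⁿ be a unit vector and Θ : ℝⁿ → ℝⁿ an orthogonal linear map with Θν = e₁. Set L_k = 2^k, l_k = 2^{k/2}, c_k = 2^k, ρ_k = L_k · l_k^{n−1} = 2^{k(n+1)/2}, and let B_{ν,k} = Θ⁻¹([c_k − L_k/2, c_k + L_k/2] × [−l_k/2, l_k/2]^{n−1}). Suppose χ̂ : ℝⁿ → ℂ is smooth, supported in B_{ν,k}, and for every j ∈ ℕ and every multi-index α there is a constant C_{j,α} (independent of k and ν) such that |⟨ν,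 ∇_ξ⟩^j ∂_ξ^α χ̂(ξ)| ≤ C_{j,α} · 2^{−k(j + |α|/2)} for all ξ. Define φ(x) = (2π)^{−n} ρ_k^{−1/2} ∫_{ℝⁿ} χ̂(ξ) exp(i⟨x, ξ⟩) dξ. Then for every N ∈ ℕ there exists a constant C_N, depending only on n, N and the constants C_{j,α}, such that for all x ≠ 0: |φ(x)| ≤ C_N · 2^{k(n+1)/4} · (2^k |⟨ν, x⟩| + 2^{k/2} ‖x‖)^{−N}. -/
open MeasureTheory

/-- The list of direction vectors consisting of `j` copies of `ν` followed by, for each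
coordinate `i`, `α i` copies of the `i`-th standard basis vector; it encodes the mixed
derivative `⟨ν,∂_ξ⟩^j ∂_ξ^α`. -/
noncomputable def packetVecs {n : ℕ} (ν : EuclideanSpace ℝ (Fin n)) (j : ℕ)
    (α : Fin n → ℕ) : List (EuclideanSpace ℝ (Fin n)) :=
  List.replicate j ν ++
    (List.finRange n).flatMap fun i => List.replicate (α i) (EuclideanSpace.single i 1)

open MeasureTheory Function

variable {E : Type*} [NormedAddCommGroup E] [NormedSpace ℝ E]

/-- Iterated directional derivative along a list of directions (head = outermost). -/
noncomputable def mD : List E → (E → ℂ) → E → ℂ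
  | [], f => f
  | v :: vs, f => fun ξ => fderiv ℝ (mD vs f) ξ v

@[simp] lemma mD_nil (f : E → ℂ) : mD ([] : List E) f = f := rfl
lemma mD_cons (v : E) (vs : List E) (f : E → ℂ) :
    mD (v :: vs) f = fun ξ => fderiv ℝ (mD vs f) ξ v := rfl

lemma mD_contDiff : ∀ (vs : List E) (f : E → ℂ), ContDiff ℝ (⊤ : ℕ∞) f →
    ContDiff ℝ (⊤ : ℕ∞) (mD vs f)
  | [], f, hf => hf
  | v :: vs, f, hf => by
    rw [mD_cons]
    exact ((mD_contDiff vs f hf).fderiv_right (by simp)).clm_apply contDiff_const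

lemma mD_support : ∀ (vs : List E) (f : E → ℂ), support (mD vs f) ⊆ tsupport f
  | [], f => subset_tsupport f
  | v :: vs, f => by
    rw [mD_cons]
    intro ξ hξ
    have h1 : fderiv ℝ (mD vs f) ξ ≠ 0 := fun h => hξ (by simp [h])
    have h2 : ξ ∈ tsupport (mD vs f) := support_fderiv_subset ℝ h1
    have h3 : tsupport (mD vs f) ⊆ tsupport f :=
      closure_minimal (mD_support vs f) isClosed_closure
    exact h3 h2

lemma mD_hasCompactSupport (vs : List E) (f : E → ℂ) (hf : HasCompactSupport f) :
    HasCompactSupport (mD vs f) :=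
  hf.mono' (mD_support vs f)

lemma mD_eq_iteratedFDeriv : ∀ (vs : List E) (f : E → ℂ), ContDiff ℝ (⊤ : ℕ∞) f →
    ∀ ξ, mD vs f ξ = iteratedFDeriv ℝ vs.length f ξ (fun i => vs.get i)
  | [], f, hf, ξ => by simp [iteratedFDeriv_zero_apply]
  | v :: vs, f, hf, ξ => by
    rw [mD_cons]
    have h1 : mD vs f = fun y => iteratedFDeriv ℝ vs.length f y (fun i => vs.get i) :=
      funext (mD_eq_iteratedFDeriv vs f hf)
    rw [h1]
    show (fderiv ℝ (fun y => (iteratedFDeriv ℝ vs.length f y) fun i => vs.get i) ξ) v = _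
    have hdiff : DifferentiableAt ℝ (iteratedFDeriv ℝ vs.length f) ξ :=
      (hf.differentiable_iteratedFDeriv (by exact_mod_cast WithTop.coe_lt_top _)).differentiableAt
    rw [fderiv_continuousMultilinear_apply_const_apply hdiff]
    rfl

open MeasureTheory Function Complex

variable {n : ℕ}
local notation "E" n => EuclideanSpace ℝ (Fin n)

noncomputable def eFun (x : EuclideanSpace ℝ (Fin n)) (ξ : EuclideanSpace ℝ (Fin n)) : ℂ :=
  Complex.exp (Complex.I * ((inner ℝ x ξ : ℝ) : ℂ))

lemma eFun_hasFDerivAt (x ξ : EuclideanSpace ℝ (Fin n)) :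
    HasFDerivAt (eFun x)
      ((eFun x ξ * Complex.I) • (Complex.ofRealCLM.comp
        (innerSL ℝ x : EuclideanSpace ℝ (Fin n) →L[ℝ] ℝ))) ξ := by
  have h1 : HasFDerivAt (fun ξ : EuclideanSpace ℝ (Fin n) => (inner ℝ x ξ : ℝ))
      (innerSL ℝ x : EuclideanSpace ℝ (Fin n) →L[ℝ] ℝ) ξ :=
    (innerSL ℝ x).hasFDerivAt
  have h2 : HasFDerivAt (fun ξ : EuclideanSpace ℝ (Fin n) => ((inner ℝ x ξ : ℝ) : ℂ))
      (Complex.ofRealCLM.comp (innerSL ℝ x : EuclideanSpace ℝ (Fin n) →L[ℝ] ℝ)) ξ :=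
    Complex.ofRealCLM.hasFDerivAt.comp ξ h1
  have h3 : HasFDerivAt (fun ξ : EuclideanSpace ℝ (Fin n) => Complex.I * ((inner ℝ x ξ : ℝ) : ℂ))
      (Complex.I • (Complex.ofRealCLM.comp (innerSL ℝ x : EuclideanSpace ℝ (Fin n) →L[ℝ] ℝ))) ξ :=
    h2.const_mul Complex.I
  have h4 := h3.cexp
  rw [smul_smul] at h4
  exact h4

lemma eFun_fderiv_apply (x ξ v : EuclideanSpace ℝ (Fin n)) :
    fderiv ℝ (eFun x) ξ v = eFun x ξ * (Complex.I * ((inner ℝ x v : ℝ) : ℂ)) := by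
  rw [(eFun_hasFDerivAt x ξ).fderiv]
  simp [mul_assoc]

lemma eFun_continuous (x : EuclideanSpace ℝ (Fin n)) : Continuous (eFun x) := by
  exact Complex.continuous_exp.comp <| continuous_const.mul <|
    Complex.continuous_ofReal.comp (innerSL ℝ x).continuous

lemma eFun_differentiable (x : EuclideanSpace ℝ (Fin n)) : Differentiable ℝ (eFun x) :=
  fun ξ => (eFun_hasFDerivAt x ξ).differentiableAt

@[simp] lemma eFun_abs (x ξ : EuclideanSpace ℝ (Fin n)) : ‖eFun x ξ‖ = 1 := by
  rw [eFun, Complex.norm_exp]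
  simp

lemma ibp_step (x v : EuclideanSpace ℝ (Fin n)) (g : EuclideanSpace ℝ (Fin n) → ℂ)
    (hg : ContDiff ℝ (⊤ : ℕ∞) g) (hs : HasCompactSupport g) :
    ∫ ξ, fderiv ℝ g ξ v * eFun x ξ =
      (-(Complex.I * ((inner ℝ x v : ℝ) : ℂ))) * ∫ ξ, g ξ * eFun x ξ := by
  have hgc : Continuous g := hg.continuous
  have hg'c : Continuous (fun ξ => fderiv ℝ g ξ v) :=
    ((hg.fderiv_right (m := (⊤:ℕ∞)) (by simp)).clm_apply contDiff_const).continuous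
  have hf'g : Integrable (fun ξ => fderiv ℝ g ξ v * eFun x ξ) :=
    ((hg'c.mul (eFun_continuous x)).integrable_of_hasCompactSupport
      ((hs.fderiv_apply ℝ v).mul_right))
  have hfe : (fun ξ => g ξ * fderiv ℝ (eFun x) ξ v) =
      fun ξ => (Complex.I * ((inner ℝ x v : ℝ) : ℂ)) * (g ξ * eFun x ξ) := by
    funext ξ; rw [eFun_fderiv_apply]; ring
  have hfg : Integrable (fun ξ => g ξ * eFun x ξ) :=
    (hgc.mul (eFun_continuous x)).integrable_of_hasCompactSupport hs.mul_right
  have hfg' : Integrable (fun ξ => g ξ * fderiv ℝ (eFun x) ξ v) := by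
    rw [hfe]; exact hfg.const_mul _
  have h := integral_mul_fderiv_eq_neg_fderiv_mul_of_integrable hf'g hfg' hfg
    (fun y _ => (hg.differentiable (by simp)) y) (fun y _ => eFun_differentiable x y)
  rw [hfe] at h
  rw [integral_const_mul] at h
  linear_combination h

lemma ibp_abs {n : ℕ} (x : EuclideanSpace ℝ (Fin n)) (χ : EuclideanSpace ℝ (Fin n) → ℂ)
    (hχ : ContDiff ℝ (⊤ : ℕ∞) χ) (hs : HasCompactSupport χ) :
    ∀ vs : List (EuclideanSpace ℝ (Fin n)),
      ‖∫ ξ, mD vs χ ξ * eFun x ξ‖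
        = (vs.map fun v => |(inner ℝ x v : ℝ)|).prod * ‖∫ ξ, χ ξ * eFun x ξ‖
  | [] => by simp
  | v :: vs => by
    have h : (∫ ξ, mD (v :: vs) χ ξ * eFun x ξ)
        = (-(Complex.I * ((inner ℝ x v : ℝ) : ℂ))) * ∫ ξ, mD vs χ ξ * eFun x ξ :=
      ibp_step x v (mD vs χ) (mD_contDiff vs χ hχ) (mD_hasCompactSupport vs χ hs)
    rw [h, norm_mul, ibp_abs x χ hχ hs vs, List.map_cons, List.prod_cons]
    have : ‖-(Complex.I * ((inner ℝ x v : ℝ) : ℂ))‖ = |(inner ℝ x v : ℝ)| := by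
      rw [show -(Complex.I * ((inner ℝ x v : ℝ) : ℂ))
          = (-Complex.I) * ((inner ℝ x v : ℝ) : ℂ) by ring, norm_mul, Complex.norm_real]
      norm_num
    rw [this]
    ring

open MeasureTheory Function Complex

section listprod
variable {ι α : Type*}

lemma list_prod_flatMap (g : α → ℝ) : ∀ (l : List ι) (f : ι → List α),
    (((l.flatMap f).map g).prod) = (l.map fun a => ((f a).map g).prod).prod
  | [], f => by simp
  | a :: l, f => by
    simp [List.flatMap_cons, list_prod_flatMap g l f]

end listprod

lemma packet_prod {n : ℕ} (ν : EuclideanSpace ℝ (Fin n)) (j : ℕ) (α : Fin n → ℕ)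
    (g : EuclideanSpace ℝ (Fin n) → ℝ) :
    ((packetVecs ν j α).map g).prod = g ν ^ j * ∏ i, g (EuclideanSpace.single i 1) ^ α i := by
  rw [packetVecs, List.map_append, List.prod_append, List.map_replicate, List.prod_replicate]
  congr 1
  rw [list_prod_flatMap]
  rw [Fin.prod_univ_def]
  congr 1
  simp [List.map_replicate]

lemma euclidean_norm_le_sum_abs {n : ℕ} (x : EuclideanSpace ℝ (Fin n)) :
    ‖x‖ ≤ ∑ i, |x i| := by
  have hx : x = ∑ i, x i • EuclideanSpace.single i (1 : ℝ) := by
    ext j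
    have h : (∑ i : Fin n, x i • EuclideanSpace.single i (1:ℝ)) j
        = ∑ i : Fin n, (x i • EuclideanSpace.single i (1:ℝ)) j := by rw [WithLp.ofLp_sum, Finset.sum_apply]
    rw [h]
    simp [EuclideanSpace.single_apply]
  calc ‖x‖ = ‖∑ i, x i • EuclideanSpace.single i (1 : ℝ)‖ := by rw [← hx]
    _ ≤ ∑ i, ‖x i • EuclideanSpace.single i (1 : ℝ)‖ := norm_sum_le _ _
    _ = ∑ i, |x i| := by
      refine Finset.sum_congr rfl fun i _ => ?_
      rw [norm_smul, EuclideanSpace.norm_single]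
      simp [Real.norm_eq_abs]

open MeasureTheory Function

lemma volume_boxE {n : ℕ} (i0 : Fin n) (p q r s : ℝ) :
    volume {y : EuclideanSpace ℝ (Fin n) |
        ∀ i, y i ∈ (if i = i0 then Set.Icc p q else Set.Icc r s)} =
      ENNReal.ofReal (q - p) * ENNReal.ofReal (s - r) ^ (n - 1) := by
  have h1 : {y : EuclideanSpace ℝ (Fin n) |
        ∀ i, y i ∈ (if i = i0 then Set.Icc p q else Set.Icc r s)} =
      (MeasurableEquiv.toLp 2 (Fin n → ℝ)).symm ⁻¹'
        (Set.univ.pi fun i => if i = i0 then Set.Icc p q else Set.Icc r s) := by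
    ext y
    simp only [Set.mem_preimage, Set.mem_pi, Set.mem_univ, forall_true_left, Set.mem_setOf_eq]
    rfl
  have hmeas : MeasurableSet (Set.univ.pi fun i : Fin n =>
      if i = i0 then Set.Icc p q else Set.Icc r s) := by
    refine MeasurableSet.univ_pi fun i => ?_
    split <;> exact measurableSet_Icc
  rw [h1, (EuclideanSpace.volume_preserving_symm_measurableEquiv_toLp (Fin n)).measure_preimage
    hmeas.nullMeasurableSet, volume_pi_pi]
  have h2 : ∀ i : Fin n, volume (if i = i0 then Set.Icc p q else Set.Icc r s)
      = if i = i0 then ENNReal.ofReal (q - p) else ENNReal.ofReal (s - r) := by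
    intro i; split <;> rw [Real.volume_Icc]
  rw [Finset.prod_congr rfl fun i _ => h2 i]
  rw [← Finset.mul_prod_erase Finset.univ _ (Finset.mem_univ i0), if_pos rfl]
  congr 1
  rw [Finset.prod_congr rfl fun i hi => if_neg (Finset.ne_of_mem_erase hi),
    Finset.prod_const, Finset.card_erase_of_mem (Finset.mem_univ i0),
    Finset.card_univ, Fintype.card_fin]

lemma isCompact_boxE {n : ℕ} (i0 : Fin n) (p q r s : ℝ) :
    IsCompact {y : EuclideanSpace ℝ (Fin n) |
        ∀ i, y i ∈ (if i = i0 then Set.Icc p q else Set.Icc r s)} := by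
  set B := {y : EuclideanSpace ℝ (Fin n) |
        ∀ i, y i ∈ (if i = i0 then Set.Icc p q else Set.Icc r s)} with hB
  have hclosed : IsClosed B := by
    have : B = ⋂ i, (EuclideanSpace.proj (𝕜 := ℝ) i) ⁻¹'
        (if i = i0 then Set.Icc p q else Set.Icc r s) := by
      ext y; simp [Set.mem_iInter, hB]
    rw [this]
    refine isClosed_iInter fun i => IsClosed.preimage (EuclideanSpace.proj i).continuous ?_
    split <;> exact isClosed_Icc
  have hbounded : Bornology.IsBounded B := by
    rw [isBounded_iff_forall_norm_le]
    refine ⟨(n : ℝ) * (|p| + |q| + (|r| + |s|)), fun y hy => ?_⟩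
    have hco : ∀ i, |y i| ≤ |p| + |q| + (|r| + |s|) := by
      intro i
      have h := hy i
      split at h
      · calc |y i| ≤ max |p| |q| := abs_le_max_abs_abs h.1 h.2
          _ ≤ |p| + |q| + (|r| + |s|) := by
            apply max_le <;> nlinarith [abs_nonneg p, abs_nonneg q, abs_nonneg r, abs_nonneg s]
      · calc |y i| ≤ max |r| |s| := abs_le_max_abs_abs h.1 h.2
          _ ≤ |p| + |q| + (|r| + |s|) := by
            apply max_le <;> nlinarith [abs_nonneg p, abs_nonneg q, abs_nonneg r, abs_nonneg s]
    calc ‖y‖ ≤ ∑ i, |y i| := by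
          have hx : y = ∑ i, y i • EuclideanSpace.single i (1 : ℝ) := by
            ext j
            have h : (∑ i : Fin n, y i • EuclideanSpace.single i (1:ℝ)) j
                = ∑ i : Fin n, (y i • EuclideanSpace.single i (1:ℝ)) j := by rw [WithLp.ofLp_sum, Finset.sum_apply]
            rw [h]
            simp [EuclideanSpace.single_apply]
          calc ‖y‖ = ‖∑ i, y i • EuclideanSpace.single i (1 : ℝ)‖ := by rw [← hx]
            _ ≤ ∑ i, ‖y i • EuclideanSpace.single i (1 : ℝ)‖ := norm_sum_le _ _
            _ = ∑ i, |y i| := by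
              refine Finset.sum_congr rfl fun i _ => ?_
              rw [norm_smul, EuclideanSpace.norm_single]
              simp [Real.norm_eq_abs]
      _ ≤ ∑ _i : Fin n, (|p| + |q| + (|r| + |s|)) := Finset.sum_le_sum fun i _ => hco i
      _ = (n : ℝ) * (|p| + |q| + (|r| + |s|)) := by
          rw [Finset.sum_const, Finset.card_univ, Fintype.card_fin, nsmul_eq_mul]
  exact Metric.isCompact_of_isClosed_isBounded hclosed hbounded

/-- Spatial decay of wave packets in the dyadic parabolic decomposition: a smooth symbol
`χ̂` supported in the rotated parabolic box `B_{ν,k}` and satisfying the parabolic symbol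
estimates gives rise to a packet `φ = F⁻¹(ρ_k^{-1/2} χ̂)` obeying
`|φ(x)| ≤ C_N 2^{k(n+1)/4} (2^k |⟨ν,x⟩| + 2^{k/2}‖x‖)^{-N}`, with `C_N` depending only on
`n`, `N` and the symbol constants. -/
theorem stmt_13
    (n : ℕ) (hn : 0 < n) (C : ℕ → (Fin n → ℕ) → ℝ) (N : ℕ) :
    ∃ C_N : ℝ, ∀ k : ℕ, 1 ≤ k →
      ∀ ν : EuclideanSpace ℝ (Fin n), ‖ν‖ = 1 →
      ∀ Θ : EuclideanSpace ℝ (Fin n) ≃ₗᵢ[ℝ] EuclideanSpace ℝ (Fin n),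
        Θ ν = EuclideanSpace.single (⟨0, hn⟩ : Fin n) (1 : ℝ) →
      ∀ χh : EuclideanSpace ℝ (Fin n) → ℂ, ContDiff ℝ (⊤ : ℕ∞) χh →
        Function.support χh ⊆
          {ξ : EuclideanSpace ℝ (Fin n) |
            (Θ ξ) ⟨0, hn⟩ ∈ Set.Icc ((2:ℝ)^k - (2:ℝ)^k / 2) ((2:ℝ)^k + (2:ℝ)^k / 2) ∧
            ∀ i : Fin n, i ≠ ⟨0, hn⟩ →
              (Θ ξ) i ∈ Set.Icc (-((2:ℝ)^((k:ℝ)/2) / 2)) ((2:ℝ)^((k:ℝ)/2) / 2)} →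
        (∀ (j : ℕ) (α : Fin n → ℕ) (ξ : EuclideanSpace ℝ (Fin n)),
          ‖iteratedFDeriv ℝ (packetVecs ν j α).length χh ξ ((packetVecs ν j α).get)‖
            ≤ C j α * (2:ℝ) ^ (-(k:ℝ) * ((j:ℝ) + (∑ i, (α i : ℝ)) / 2))) →
      ∀ x : EuclideanSpace ℝ (Fin n), x ≠ 0 →
        ‖(((((2 * Real.pi)^n)⁻¹ *
              ((2:ℝ) ^ (((k:ℝ) * ((n:ℝ) + 1)) / 2)) ^ (-(1/2 : ℝ)) : ℝ) : ℂ) *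
            ∫ ξ : EuclideanSpace ℝ (Fin n),
              χh ξ * Complex.exp (Complex.I * ((inner ℝ x ξ : ℝ) : ℂ)))‖
        ≤ C_N * (2:ℝ) ^ ((k:ℝ) * ((n:ℝ) + 1) / 4) *
            ((2:ℝ) ^ (k:ℝ) * |(inner ℝ ν x : ℝ)| + (2:ℝ) ^ ((k:ℝ)/2) * ‖x‖) ^ (-(N:ℝ)) := by
  classical
  refine ⟨((n:ℝ)+1)^N * (C N (fun _ => 0) +
      ∑ i : Fin n, C 0 (fun i' => if i' = i then N else 0)), ?_⟩
  intro k hk ν hν Θ hΘν χh hsmooth hsupp hC x hx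
  set i0 : Fin n := ⟨0, hn⟩ with hi0
  set p : ℝ := (2:ℝ)^k - (2:ℝ)^k/2 with hp
  set q : ℝ := (2:ℝ)^k + (2:ℝ)^k/2 with hq
  set c : ℝ := (2:ℝ)^((k:ℝ)/2)/2 with hc
  set boxE := {y : EuclideanSpace ℝ (Fin n) |
      ∀ i, y i ∈ (if i = i0 then Set.Icc p q else Set.Icc (-c) c)} with hboxE
  set Bset := ⇑Θ ⁻¹' boxE with hBsetdef
  have hboxcompact : IsCompact boxE := isCompact_boxE i0 p q (-c) c
  have hBcompact : IsCompact Bset := Θ.toHomeomorph.isCompact_preimage.2 hboxcompact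
  have hBclosed : IsClosed Bset := hboxcompact.isClosed.preimage Θ.continuous
  have hsupp' : Function.support χh ⊆ Bset := by
    intro ξ hξ
    have h := hsupp hξ
    show ∀ i, (Θ ξ) i ∈ (if i = i0 then Set.Icc p q else Set.Icc (-c) c)
    intro i
    by_cases hi : i = i0
    · rw [if_pos hi, hi]; exact h.1
    · rw [if_neg hi]; exact h.2 i hi
  have htsupp : tsupport χh ⊆ Bset := closure_minimal hsupp' hBclosed
  have hcs : HasCompactSupport χh :=
    HasCompactSupport.intro hBcompact fun ξ hξ => by
      by_contra h
      exact hξ (hsupp' (Function.mem_support.2 h))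
  -- volume of the box
  have hvol : volume Bset = ENNReal.ofReal (q - p) * ENNReal.ofReal (c - -c) ^ (n - 1) := by
    rw [hBsetdef,
      Θ.measurePreserving.measure_preimage hboxcompact.isClosed.measurableSet.nullMeasurableSet,
      hboxE, volume_boxE i0 p q (-c) c]
  set ρr : ℝ := (2:ℝ)^(((k:ℝ)*((n:ℝ)+1))/2) with hρr
  have hρrpos : (0:ℝ) < ρr := Real.rpow_pos_of_pos two_pos _
  have hqp : q - p = (2:ℝ)^k := by rw [hq, hp]; ring
  have hcc : c - -c = (2:ℝ)^((k:ℝ)/2) := by rw [hc]; ring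
  have htoReal : (volume Bset).toReal = ρr := by
    rw [hvol, hqp, hcc, ENNReal.toReal_mul, ENNReal.toReal_pow,
      ENNReal.toReal_ofReal (by positivity), ENNReal.toReal_ofReal (by positivity)]
    rw [← Real.rpow_natCast (2:ℝ) k, ← Real.rpow_natCast ((2:ℝ)^((k:ℝ)/2)) (n-1),
      ← Real.rpow_mul (by norm_num : (0:ℝ) ≤ 2), ← Real.rpow_add (by norm_num : (0:ℝ) < 2), hρr]
    congr 1
    rw [Nat.cast_sub hn]
    push_cast
    ring
  have hfin : volume Bset < ⊤ := by
    rw [hvol]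
    exact ENNReal.mul_lt_top ENNReal.ofReal_lt_top (ENNReal.pow_lt_top ENNReal.ofReal_lt_top)
  set S0 : ℝ := ‖∫ ξ, χh ξ * eFun x ξ‖ with hS0
  have hS0nonneg : 0 ≤ S0 := norm_nonneg _
  -- the key estimate coming from repeated integration by parts
  have hkey : ∀ (j : ℕ) (α : Fin n → ℕ),
      (|(inner ℝ x ν : ℝ)|^j * ∏ i, |x i|^(α i)) * S0 ≤
        ρr * (C j α * (2:ℝ)^(-(k:ℝ)*((j:ℝ)+(∑ i, (α i : ℝ))/2))) := by
    intro j α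
    have h1 : ‖∫ ξ, mD (packetVecs ν j α) χh ξ * eFun x ξ‖
        = (((packetVecs ν j α).map fun v => |(inner ℝ x v : ℝ)|).prod) * S0 :=
      ibp_abs x χh hsmooth hcs (packetVecs ν j α)
    have h2 : (((packetVecs ν j α).map fun v => |(inner ℝ x v : ℝ)|).prod)
        = |(inner ℝ x ν : ℝ)|^j * ∏ i, |x i|^(α i) := by
      rw [packet_prod]
      congr 1
      refine Finset.prod_congr rfl fun i _ => ?_
      congr 1
      rw [show ((inner ℝ x (EuclideanSpace.single i (1:ℝ)) : ℝ)) = x i by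
        rw [EuclideanSpace.inner_single_right]; simp]
    have hbound : ∀ ξ, ‖mD (packetVecs ν j α) χh ξ * eFun x ξ‖ ≤
        C j α * (2:ℝ)^(-(k:ℝ)*((j:ℝ)+(∑ i, (α i : ℝ))/2)) := by
      intro ξ
      rw [norm_mul, eFun_abs, mul_one,
        mD_eq_iteratedFDeriv _ χh hsmooth ξ]
      exact hC j α ξ
    have hsupport0 : ∀ ξ, ξ ∉ Bset → mD (packetVecs ν j α) χh ξ * eFun x ξ = 0 := by
      intro ξ hξ
      have h0 : mD (packetVecs ν j α) χh ξ = 0 := by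
        by_contra h
        exact hξ (htsupp (mD_support _ χh (Function.mem_support.2 h)))
      rw [h0, zero_mul]
    have h3 : ‖∫ ξ, mD (packetVecs ν j α) χh ξ * eFun x ξ‖ ≤
        (C j α * (2:ℝ)^(-(k:ℝ)*((j:ℝ)+(∑ i, (α i : ℝ))/2))) * (volume Bset).toReal := by
      rw [show (∫ ξ, mD (packetVecs ν j α) χh ξ * eFun x ξ)
          = ∫ ξ in Bset, mD (packetVecs ν j α) χh ξ * eFun x ξ from
        (setIntegral_eq_integral_of_forall_compl_eq_zero hsupport0).symm]
      exact MeasureTheory.norm_setIntegral_le_of_norm_le_const hfin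
        fun ξ _ => hbound ξ
    calc (|(inner ℝ x ν : ℝ)|^j * ∏ i, |x i|^(α i)) * S0
        = ‖∫ ξ, mD (packetVecs ν j α) χh ξ * eFun x ξ‖ := by rw [h1, h2]
      _ ≤ (C j α * (2:ℝ)^(-(k:ℝ)*((j:ℝ)+(∑ i, (α i : ℝ))/2))) * (volume Bset).toReal := h3
      _ = ρr * (C j α * (2:ℝ)^(-(k:ℝ)*((j:ℝ)+(∑ i, (α i : ℝ))/2))) := by
          rw [htoReal]; ring
  -- nonnegativity of the constants we use
  have hCnonneg : ∀ (j : ℕ) (α : Fin n → ℕ), 0 ≤ C j α := by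
    intro j α
    have h := (norm_nonneg _).trans (hC j α 0)
    have hp2 : (0:ℝ) < (2:ℝ)^(-(k:ℝ)*((j:ℝ)+(∑ i, (α i : ℝ))/2)) :=
      Real.rpow_pos_of_pos two_pos _
    nlinarith
  -- the vector of "pure" factors
  set t : Fin (n+1) → ℝ :=
    Fin.cons ((2:ℝ)^(k:ℝ) * |(inner ℝ ν x : ℝ)|) (fun i => (2:ℝ)^((k:ℝ)/2) * |x i|) with ht
  have htnonneg : ∀ j, 0 ≤ t j := by
    intro j
    refine Fin.cases ?_ ?_ j <;> intros <;>
      · rw [ht]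
        simp only [Fin.cons_zero, Fin.cons_succ]
        positivity
  set A : ℝ := (2:ℝ)^(k:ℝ) * |(inner ℝ ν x : ℝ)| + (2:ℝ)^((k:ℝ)/2) * ‖x‖ with hA
  have hApos : 0 < A := by
    have h1 : (0:ℝ) < (2:ℝ)^((k:ℝ)/2) * ‖x‖ :=
      mul_pos (Real.rpow_pos_of_pos two_pos _) (norm_pos_iff.2 hx)
    have h2 : (0:ℝ) ≤ (2:ℝ)^(k:ℝ) * |(inner ℝ ν x : ℝ)| := by positivity
    rw [hA]; linarith
  have hA_le : A ≤ ∑ j, t j := by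
    rw [ht, Fin.sum_cons, hA]
    refine add_le_add le_rfl ?_
    calc (2:ℝ)^((k:ℝ)/2) * ‖x‖ ≤ (2:ℝ)^((k:ℝ)/2) * ∑ i, |x i| := by
          have := euclidean_norm_le_sum_abs x
          have h2 : (0:ℝ) ≤ (2:ℝ)^((k:ℝ)/2) := by positivity
          nlinarith
      _ = ∑ i, (2:ℝ)^((k:ℝ)/2) * |x i| := Finset.mul_sum _ _ _
  have hunivne : (Finset.univ : Finset (Fin (n+1))).Nonempty := Finset.univ_nonempty
  set M : ℝ := Finset.univ.sup' hunivne t with hM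
  have hMle : ∀ j, t j ≤ M := fun j => by
    rw [hM]; exact Finset.le_sup' t (Finset.mem_univ j)
  obtain ⟨j0, -, hj0⟩ := Finset.exists_mem_eq_sup' hunivne t
  have hMnonneg : 0 ≤ M := by rw [hM, hj0]; exact htnonneg j0
  have hMN : M^N ≤ ∑ j, t j ^ N := by
    rw [hM, hj0]
    exact Finset.single_le_sum (fun j _ => pow_nonneg (htnonneg j) N) (Finset.mem_univ j0)
  have hsum_le : ∑ j, t j ≤ ((n:ℝ)+1) * M := by
    calc ∑ j, t j ≤ (Finset.univ : Finset (Fin (n+1))).card • M :=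
          Finset.sum_le_card_nsmul _ _ _ fun j _ => hMle j
      _ = ((n:ℝ)+1) * M := by
          rw [Finset.card_univ, Fintype.card_fin, nsmul_eq_mul]
          push_cast; ring
  have hApow : A^N ≤ ((n:ℝ)+1)^N * ∑ j, t j ^ N := by
    calc A^N ≤ (∑ j, t j)^N := pow_le_pow_left₀ hApos.le hA_le N
      _ ≤ (((n:ℝ)+1) * M)^N := by
          refine pow_le_pow_left₀ ?_ hsum_le N
          exact Finset.sum_nonneg fun j _ => htnonneg j
      _ = ((n:ℝ)+1)^N * M^N := mul_pow _ _ _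
      _ ≤ ((n:ℝ)+1)^N * ∑ j, t j ^ N := by
          refine mul_le_mul_of_nonneg_left hMN ?_
          positivity
  -- pure term estimates
  have hterm0 : t 0 ^ N * S0 ≤ ρr * C N (fun _ => 0) := by
    have hk0 := hkey N (fun _ => 0)
    simp only [pow_zero, Finset.prod_const_one, mul_one, Nat.cast_zero, Finset.sum_const_zero,
      zero_div, add_zero] at hk0
    have hrw : ((2:ℝ)^(k:ℝ))^N * (2:ℝ)^(-(k:ℝ)*(N:ℝ)) = 1 := by
      rw [← Real.rpow_natCast ((2:ℝ)^(k:ℝ)) N, ← Real.rpow_mul (by norm_num : (0:ℝ) ≤ 2),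
        ← Real.rpow_add (by norm_num : (0:ℝ) < 2)]
      norm_num
    have h0 : t 0 = (2:ℝ)^(k:ℝ) * |(inner ℝ ν x : ℝ)| := by rw [ht]; simp
    rw [h0, mul_pow, real_inner_comm]
    calc ((2:ℝ)^(k:ℝ))^N * |(inner ℝ x ν : ℝ)|^N * S0
        = ((2:ℝ)^(k:ℝ))^N * (|(inner ℝ x ν : ℝ)|^N * S0) := by ring
      _ ≤ ((2:ℝ)^(k:ℝ))^N * (ρr * (C N (fun _ => 0) * (2:ℝ)^(-(k:ℝ)*(N:ℝ)))) := by
          refine mul_le_mul_of_nonneg_left hk0 ?_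
          positivity
      _ = ρr * C N (fun _ => 0) * (((2:ℝ)^(k:ℝ))^N * (2:ℝ)^(-(k:ℝ)*(N:ℝ))) := by ring
      _ = ρr * C N (fun _ => 0) := by rw [hrw, mul_one]
  have hterm_succ : ∀ i : Fin n,
      t i.succ ^ N * S0 ≤ ρr * C 0 (fun i' => if i' = i then N else 0) := by
    intro i
    have hk0 := hkey 0 (fun i' => if i' = i then N else 0)
    have hprod : (∏ i', |x i'|^(if i' = i then N else 0)) = |x i|^N := by
      rw [Finset.prod_eq_single i
        (fun b _ hb => by rw [if_neg hb, pow_zero])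
        (fun hb => absurd (Finset.mem_univ i) hb)]
      rw [if_pos rfl]
    have hsumα : (∑ i', ((if i' = i then N else 0 : ℕ) : ℝ)) = (N:ℝ) := by
      push_cast
      simp
    rw [hprod, hsumα, pow_zero, one_mul] at hk0
    have hrw : ((2:ℝ)^((k:ℝ)/2))^N * (2:ℝ)^(-(k:ℝ)*(((0:ℕ):ℝ)+(N:ℝ)/2)) = 1 := by
      rw [← Real.rpow_natCast ((2:ℝ)^((k:ℝ)/2)) N, ← Real.rpow_mul (by norm_num : (0:ℝ) ≤ 2),
        ← Real.rpow_add (by norm_num : (0:ℝ) < 2),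
        show (k:ℝ)/2*(N:ℝ) + -(k:ℝ)*(((0:ℕ):ℝ)+(N:ℝ)/2) = 0 by push_cast; ring,
        Real.rpow_zero]
    have h0 : t i.succ = (2:ℝ)^((k:ℝ)/2) * |x i| := by rw [ht]; simp
    rw [h0, mul_pow]
    calc ((2:ℝ)^((k:ℝ)/2))^N * |x i|^N * S0
        = ((2:ℝ)^((k:ℝ)/2))^N * (|x i|^N * S0) := by ring
      _ ≤ ((2:ℝ)^((k:ℝ)/2))^N *
            (ρr * (C 0 (fun i' => if i' = i then N else 0) *
              (2:ℝ)^(-(k:ℝ)*(((0:ℕ):ℝ)+(N:ℝ)/2)))) := by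
          refine mul_le_mul_of_nonneg_left ?_ (by positivity)
          exact_mod_cast hk0
      _ = ρr * C 0 (fun i' => if i' = i then N else 0) *
            (((2:ℝ)^((k:ℝ)/2))^N * (2:ℝ)^(-(k:ℝ)*(((0:ℕ):ℝ)+(N:ℝ)/2))) := by ring
      _ = ρr * C 0 (fun i' => if i' = i then N else 0) := by rw [hrw, mul_one]
  -- combine
  set K : ℝ := ((n:ℝ)+1)^N * (C N (fun _ => 0) +
      ∑ i : Fin n, C 0 (fun i' => if i' = i then N else 0)) with hK
  have hKnonneg : 0 ≤ K := by
    rw [hK]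
    have h1 := hCnonneg N (fun _ => 0)
    have h2 : (0:ℝ) ≤ ∑ i : Fin n, C 0 (fun i' => if i' = i then N else 0) :=
      Finset.sum_nonneg fun i _ => hCnonneg _ _
    positivity
  have hmain : S0 * A^N ≤ ρr * K := by
    calc S0 * A^N ≤ S0 * (((n:ℝ)+1)^N * ∑ j, t j ^ N) :=
          mul_le_mul_of_nonneg_left hApow hS0nonneg
      _ = ((n:ℝ)+1)^N * ∑ j, t j ^ N * S0 := by
          rw [← Finset.sum_mul]
          ring
      _ ≤ ((n:ℝ)+1)^N * (ρr * C N (fun _ => 0) +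
            ∑ i : Fin n, ρr * C 0 (fun i' => if i' = i then N else 0)) := by
          refine mul_le_mul_of_nonneg_left ?_ (by positivity)
          rw [Fin.sum_univ_succ]
          exact add_le_add hterm0 (Finset.sum_le_sum fun i _ => hterm_succ i)
      _ = ρr * K := by
          rw [hK, ← Finset.mul_sum]
          ring
  -- final assembly
  clear_value t M A K ρr S0
  have hintrw : (∫ ξ : EuclideanSpace ℝ (Fin n),
      χh ξ * Complex.exp (Complex.I * ((inner ℝ x ξ : ℝ) : ℂ))) = ∫ ξ, χh ξ * eFun x ξ := rfl
  have hgoalLHS : ‖(((((2 * Real.pi)^n)⁻¹ * ρr ^ (-(1/2 : ℝ)) : ℝ) : ℂ) *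
          ∫ ξ : EuclideanSpace ℝ (Fin n),
            χh ξ * Complex.exp (Complex.I * ((inner ℝ x ξ : ℝ) : ℂ)))‖
      = (((2 * Real.pi)^n)⁻¹ * ρr ^ (-(1/2 : ℝ))) * S0 := by
    rw [norm_mul, Complex.norm_real, Real.norm_eq_abs, hintrw, hS0, _root_.abs_of_nonneg (by positivity)]
  have hr1 : ((2 * Real.pi)^n)⁻¹ ≤ 1 := by
    rw [inv_le_one_iff₀]
    right
    refine one_le_pow₀ ?_
    linarith [Real.pi_gt_three]
  have hρhalf : ρr ^ (-(1/2:ℝ)) * ρr = (2:ℝ)^((k:ℝ)*((n:ℝ)+1)/4) := by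
    rw [hρr, ← Real.rpow_mul (by norm_num : (0:ℝ) ≤ 2),
      ← Real.rpow_add (by norm_num : (0:ℝ) < 2)]
    congr 1
    ring
  have hAneg : A ^ (-(N:ℝ)) = ((A:ℝ)^N)⁻¹ := by
    rw [← Real.rpow_natCast A N, ← Real.rpow_neg hApos.le]
  have hS0le : S0 ≤ ρr * K * (A^N)⁻¹ := by
    have hpow : (0:ℝ) < A^N := pow_pos hApos N
    rw [← div_eq_mul_inv, le_div_iff₀ hpow]
    exact hmain
  rw [hgoalLHS, hAneg]
  calc (((2 * Real.pi)^n)⁻¹ * ρr ^ (-(1/2 : ℝ))) * S0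
      ≤ (((2 * Real.pi)^n)⁻¹ * ρr ^ (-(1/2 : ℝ))) * (ρr * K * (A^N)⁻¹) := by
        refine mul_le_mul_of_nonneg_left hS0le ?_
        positivity
    _ = K * (((2 * Real.pi)^n)⁻¹ * (ρr ^ (-(1/2 : ℝ)) * ρr)) * (A^N)⁻¹ := by ring
    _ = K * (((2 * Real.pi)^n)⁻¹ * (2:ℝ)^((k:ℝ)*((n:ℝ)+1)/4)) * (A^N)⁻¹ := by rw [hρhalf]
    _ ≤ K * (1 * (2:ℝ)^((k:ℝ)*((n:ℝ)+1)/4)) * (A^N)⁻¹ := by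
        refine mul_le_mul_of_nonneg_right ?_ (by positivity)
        refine mul_le_mul_of_nonneg_left ?_ hKnonneg
        exact mul_le_mul_of_nonneg_right hr1 (Real.rpow_pos_of_pos two_pos _).le
    _ = K * (2:ℝ)^((k:ℝ)*((n:ℝ)+1)/4) * (A^N)⁻¹ := by rw [one_mul]
end
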